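/- Let A = [[α,0],[0,0]] be a 2×2 real matrix with α ≠ 0, and let B be a nonzero 2×2 real matrix with det(B) = 0. Then there exists a 2×2 real orthogonal matrix U of the form (1/√(x²+y²))·[[x,y],[-y,x]] with (x,y) ≠ (0,0) such that, with Z = diag(1,-1), there is a nonzero row vector v ∈ ℝ² for which all four rows of the two matrices A·U and B·U·Z are real scalar multiples of v. -/

import Mathlib

open Matrix

noncomputable section

/-- The real rotation matrix `(1/√(x²+y²))·[[x,y],[-y,x]]`. -/
def Rrot (x y : ℝ) : Matrix (Fin 2) (Fin 2) ℝ :=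
  (Real.sqrt (x ^ 2 + y ^ 2))⁻¹ • !![x, y; -y, x]

private lemma row_dep {a b : Fin 2 → ℝ} (ha : a ≠ 0)
    (h : a 0 * b 1 - b 0 * a 1 = 0) : ∃ t : ℝ, b = t • a := by
  rcases eq_or_ne (a 0) 0 with h0 | h0
  · have h1 : a 1 ≠ 0 := by
      intro h1; apply ha; funext i; fin_cases i <;> simp [h0, h1]
    refine ⟨b 1 / a 1, ?_⟩
    funext i; fin_cases i
    · simp only [Pi.smul_apply, smul_eq_mul, Fin.isValue, Fin.zero_eta, Fin.mk_one]
      rw [h0] at h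
      have : b 0 * a 1 = 0 := by linarith
      rcases mul_eq_zero.mp this with h' | h'
      · simp [h0, h']
      · exact absurd h' h1
    · simp only [Pi.smul_apply, smul_eq_mul, Fin.isValue, Fin.zero_eta, Fin.mk_one]
      field_simp
  · refine ⟨b 0 / a 0, ?_⟩
    funext i; fin_cases i
    · simp only [Pi.smul_apply, smul_eq_mul, Fin.isValue, Fin.zero_eta, Fin.mk_one]
      field_simp
    · simp only [Pi.smul_apply, smul_eq_mul, Fin.isValue, Fin.zero_eta, Fin.mk_one]
      field_simp
      nlinarith [h]

theorem stmt_18 (α : ℝ) (hα : α ≠ 0) (B : Matrix (Fin 2) (Fin 2) ℝ)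
    (hB : B ≠ 0) (hdet : B.det = 0) :
    ∃ x y : ℝ, (x, y) ≠ (0, 0) ∧
      ∃ v : Fin 2 → ℝ, v ≠ 0 ∧
        (∀ r : Fin 2, ∃ c : ℝ, (!![α, 0; 0, 0] * Rrot x y) r = c • v) ∧
        (∀ r : Fin 2, ∃ c : ℝ, (B * Rrot x y * !![(1 : ℝ), 0; 0, -1]) r = c • v) := by
  have hdet' : B 0 0 * B 1 1 - B 1 0 * B 0 1 = 0 := by
    rw [Matrix.det_fin_two] at hdet; linarith
  obtain ⟨w, hw, t0, t1, hB0, hB1⟩ :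
      ∃ w : Fin 2 → ℝ, w ≠ 0 ∧ ∃ t0 t1 : ℝ, B 0 = t0 • w ∧ B 1 = t1 • w := by
    rcases eq_or_ne (B 0) 0 with h0 | h0
    · refine ⟨B 1, ?_, 0, 1, by simp [h0], by simp⟩
      intro h1; apply hB; funext i j; fin_cases i
      · simp [congrFun h0 j]
      · simp [congrFun h1 j]
    · obtain ⟨t, ht⟩ := row_dep h0 hdet'
      exact ⟨B 0, h0, 1, t, by simp, ht⟩
  obtain ⟨z, hz⟩ := IsAlgClosed.exists_pow_nat_eq (⟨w 0, -(w 1)⟩ : ℂ) (n := 2) (by norm_num)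
  set x := z.re with hxdef
  set y := z.im with hydef
  have hzsq := hz
  rw [pow_two] at hzsq
  have hw0 : w 0 = x ^ 2 - y ^ 2 := by
    have := congrArg Complex.re hzsq
    simp [Complex.mul_re] at this
    rw [← this]; ring
  have hw1 : w 1 = -(2 * x * y) := by
    have := congrArg Complex.im hzsq
    simp [Complex.mul_im] at this
    linear_combination this
  have hz0 : z ≠ 0 := by
    intro h; apply hw; funext i; fin_cases i
    · simp [hw0, hxdef, hydef, h]
    · simp [hw1, hxdef, hydef, h]
  have hxy : ¬ (x = 0 ∧ y = 0) := by
    rintro ⟨hx, hy⟩; exact hz0 (Complex.ext hx hy)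
  have hpos : 0 < x ^ 2 + y ^ 2 := by
    rcases not_and_or.mp hxy with h | h <;> positivity
  set s := Real.sqrt (x ^ 2 + y ^ 2) with hsdef
  have hs2 : s ^ 2 = x ^ 2 + y ^ 2 := Real.sq_sqrt hpos.le
  have hs : s ≠ 0 := by positivity
  refine ⟨x, y, by simpa [Prod.ext_iff] using hxy, ![x, y], ?_, ?_, ?_⟩
  · intro h
    exact hxy ⟨congrFun h 0, congrFun h 1⟩
  · intro r; fin_cases r
    · refine ⟨α / s, ?_⟩
      funext j; fin_cases j <;>
        simp [Rrot, Matrix.mul_apply, Fin.sum_univ_two, div_eq_mul_inv] <;> ring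
    · refine ⟨0, ?_⟩
      funext j; fin_cases j <;>
        simp [Rrot, Matrix.mul_apply, Fin.sum_univ_two]
  · have key : ∀ (t : ℝ) (row : Fin 2 → ℝ), row = t • w →
        ∀ j : Fin 2, (fun j => ∑ k, (∑ l, row l * Rrot x y l k) * !![(1:ℝ),0;0,-1] k j) j
          = ((t * s) • ![x, y]) j := by
      intro t row hrow j
      have h0 : row 0 = t * w 0 := by rw [hrow]; simp
      have h1 : row 1 = t * w 1 := by rw [hrow]; simp
      fin_cases j
      · simp only [Rrot, Matrix.mul_apply, Fin.sum_univ_two, h0, h1, hw0, hw1,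
          Matrix.smul_apply, smul_eq_mul, Pi.smul_apply, Matrix.cons_val', Matrix.cons_val_zero,
          Matrix.cons_val_one, Matrix.head_cons, Matrix.head_fin_const, Matrix.empty_val',
          Matrix.cons_val_fin_one, Fin.isValue, Fin.zero_eta, Fin.mk_one, Matrix.of_apply]
        rw [← hsdef]
        field_simp
        linear_combination (-(t * x)) * hs2
      · simp only [Rrot, Matrix.mul_apply, Fin.sum_univ_two, h0, h1, hw0, hw1,
          Matrix.smul_apply, smul_eq_mul, Pi.smul_apply, Matrix.cons_val', Matrix.cons_val_zero,
          Matrix.cons_val_one, Matrix.head_cons, Matrix.head_fin_const, Matrix.empty_val',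
          Matrix.cons_val_fin_one, Fin.isValue, Fin.zero_eta, Fin.mk_one, Matrix.of_apply]
        rw [← hsdef]
        field_simp
        linear_combination (-(t * y)) * hs2
    intro r; fin_cases r
    · refine ⟨t0 * s, ?_⟩
      funext j
      have := key t0 (B 0) hB0 j
      simpa [Matrix.mul_apply, Fin.sum_univ_two] using this
    · refine ⟨t1 * s, ?_⟩
      funext j
      have := key t1 (B 1) hB1 j
      simpa [Matrix.mul_apply, Fin.sum_univ_two] using this
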